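/- Let F ⊆ E ⊆ K be finite fields with q = |F|, n = [K : F] and d = [E : F]. If η ∈ K is a normal element of K over F (its conjugates η, η^q, …, η^{q^{n−1}} form an F-basis of K), then γ = Tr_{K/E}(η) is a normal element of E over F: the conjugates γ, γ^q, …, γ^{q^{d−1}} form an F-basis of E. -/

import Mathlib

open Finset Polynomial

section Frob
variable (E K : Type*) [Field E] [Fintype E] [Field K] [Fintype K] [Algebra E K]

/-- The Frobenius `x ↦ x ^ |E|` as an `E`-algebra homomorphism of `K`. -/
noncomputable def frobHomE : K →ₐ[E] K where
  toFun x := x ^ Fintype.card E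
  map_one' := one_pow _
  map_mul' x y := mul_pow x y _
  map_zero' := zero_pow Fintype.card_pos.ne'
  map_add' x y := by
    obtain ⟨p, hp⟩ := CharP.exists E
    haveI : CharP K p := charP_of_injective_algebraMap' (A := K) E p
    obtain ⟨s, hps, hcard⟩ := FiniteField.card E p
    haveI : Fact p.Prime := ⟨hps⟩
    rw [hcard]
    exact add_pow_char_pow x y p s
  commutes' a := by
    show (algebraMap E K a) ^ Fintype.card E = algebraMap E K a
    rw [← map_pow, FiniteField.pow_card]

/-- Frobenius as an `E`-algebra equivalence. -/
noncomputable def frobEquivE : K ≃ₐ[E] K :=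
  AlgEquiv.ofBijective (frobHomE E K)
    (Finite.injective_iff_bijective.mp (frobHomE E K).toRingHom.injective)

lemma frobEquivE_pow_apply (j : ℕ) (x : K) :
    ((frobEquivE E K) ^ j) x = x ^ Fintype.card E ^ j := by
  induction j generalizing x with
  | zero => simp
  | succ j ih =>
    rw [pow_succ, AlgEquiv.mul_apply]
    show ((frobEquivE E K) ^ j) (x ^ Fintype.card E) = _
    rw [ih, ← pow_mul, ← pow_succ']

lemma trace_formula (x : K) :
    algebraMap E K (Algebra.trace E K x)
      = ∑ j : Fin (Module.finrank E K), x ^ Fintype.card E ^ (j : ℕ) := by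
  rw [trace_eq_sum_automorphisms]
  have hcardK : Fintype.card K = Fintype.card E ^ Module.finrank E K :=
    Module.card_eq_pow_finrank
  have hE1 : 1 < Fintype.card E := Fintype.one_lt_card
  have key : ∀ a b : Fin (Module.finrank E K), (a : ℕ) < (b : ℕ) →
      (frobEquivE E K) ^ (a : ℕ) = (frobEquivE E K) ^ (b : ℕ) → False := by
    intro a b hab hfe
    have hx : ∀ x : K, x ^ Fintype.card E ^ (b : ℕ) - x ^ Fintype.card E ^ (a : ℕ) = 0 := by
      intro x
      rw [← frobEquivE_pow_apply, ← frobEquivE_pow_apply, hfe, sub_self]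
    have hP : (X ^ Fintype.card E ^ (b : ℕ) - X ^ Fintype.card E ^ (a : ℕ) : K[X]) = 0 := by
      apply eq_zero_of_natDegree_lt_card_of_eval_eq_zero _ Function.injective_id
      · intro x
        simpa using hx x
      · calc natDegree (X ^ Fintype.card E ^ (b : ℕ) - X ^ Fintype.card E ^ (a : ℕ) : K[X])
            ≤ Fintype.card E ^ (b : ℕ) := by
              refine (natDegree_sub_le _ _).trans ?_
              simp [natDegree_X_pow, (pow_lt_pow_right₀ hE1 hab).le]
          _ < Fintype.card E ^ Module.finrank E K := pow_lt_pow_right₀ hE1 b.isLt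
          _ = Fintype.card K := hcardK.symm
    have hdeg : natDegree (X ^ Fintype.card E ^ (b : ℕ) - X ^ Fintype.card E ^ (a : ℕ) : K[X])
        = Fintype.card E ^ (b : ℕ) := by
      rw [natDegree_sub_eq_left_of_natDegree_lt] <;>
        simp [natDegree_X_pow, pow_lt_pow_right₀ hE1 hab]
    rw [hP, natDegree_zero] at hdeg
    exact (pow_pos (Nat.lt_of_lt_of_le Nat.zero_lt_one hE1.le) (b : ℕ)).ne hdeg
  have hinj : Function.Injective
      (fun j : Fin (Module.finrank E K) => (frobEquivE E K) ^ (j : ℕ)) := by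
    intro j1 j2 hj
    simp only at hj
    rcases lt_trichotomy (j1 : ℕ) (j2 : ℕ) with h | h | h
    · exact absurd hj (fun hj => key j1 j2 h hj)
    · exact Fin.ext h
    · exact absurd hj.symm (fun hj => key j2 j1 h hj)
  have hbij : Function.Bijective
      (fun j : Fin (Module.finrank E K) => (frobEquivE E K) ^ (j : ℕ)) := by
    rw [Fintype.bijective_iff_injective_and_card]
    refine ⟨hinj, ?_⟩
    rw [Fintype.card_fin, ← Nat.card_eq_fintype_card, IsGalois.card_aut_eq_finrank]
  refine (Fintype.sum_bijective _ hbij _ _ fun j => ?_).symm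
  rw [frobEquivE_pow_apply]

end Frob

/-- Normal basis projection: if `η` is a normal element of a finite field `K` over `F`
and `E` is an intermediate field, then `γ = Tr_{K/E}(η)` is a normal element of `E`
over `F`. -/
theorem stmt7 (F K : Type*) [Field F] [Fintype F] [Field K] [Fintype K] [Algebra F K]
    (E : IntermediateField F K) (n d : ℕ)
    (hn : Module.finrank F K = n) (hd : Module.finrank F E = d)
    (η : K)
    (hη : LinearIndependent F (fun i : Fin n => η ^ Fintype.card F ^ (i : ℕ)) ∧
      Submodule.span F (Set.range fun i : Fin n => η ^ Fintype.card F ^ (i : ℕ)) = ⊤) :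
    LinearIndependent F
        (fun i : Fin d => (Algebra.trace E K η) ^ Fintype.card F ^ (i : ℕ)) ∧
      Submodule.span F
        (Set.range fun i : Fin d => (Algebra.trace E K η) ^ Fintype.card F ^ (i : ℕ)) = ⊤ := by
  obtain ⟨hli, -⟩ := hη
  haveI : Fintype E := Fintype.ofFinite E
  set q := Fintype.card F with hqdef
  set γ := Algebra.trace E K η with hγdef
  set m := Module.finrank E K with hmdef
  have hdm : d * m = n := by
    rw [← hn, ← hd, hmdef, Module.finrank_mul_finrank F E K]
  have hd0 : 0 < d := by rw [← hd]; exact Module.finrank_pos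
  have hm0 : 0 < m := Module.finrank_pos
  have hqE : Fintype.card E = q ^ d := by rw [Module.card_eq_pow_finrank (K := F) (V := E), hd]
  obtain ⟨p, hp⟩ := CharP.exists F
  haveI : CharP F p := hp
  haveI : CharP K p := charP_of_injective_algebraMap' (A := K) F p
  obtain ⟨s, hps, hcards⟩ := FiniteField.card F p
  haveI : Fact p.Prime := ⟨hps⟩
  have hγ : algebraMap E K γ = ∑ j : Fin m, η ^ (Fintype.card E) ^ (j : ℕ) :=
    trace_formula E K η
  have hpow : ∀ i : ℕ, (algebraMap E K γ) ^ q ^ i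
      = ∑ j : Fin m, η ^ q ^ (i + d * (j : ℕ)) := by
    intro i
    have h1 : q ^ i = p ^ ((s : ℕ) * i) := by rw [pow_mul, ← hcards]
    rw [hγ, h1, ← iterateFrobenius_def, map_sum]
    refine Finset.sum_congr rfl fun j _ => ?_
    rw [iterateFrobenius_def, ← h1, hqE, ← pow_mul, ← pow_mul, ← pow_add,
      Nat.add_comm ((d : ℕ) * (j : ℕ)) i]
  have keyc : ∀ gc : Fin d → F, ∑ i : Fin d, gc i • γ ^ q ^ (i : ℕ) = 0 → ∀ i, gc i = 0 := by
    intro gc hsum i0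
    have hK0 : ∑ i : Fin d, gc i • (algebraMap E K γ) ^ q ^ (i : ℕ) = 0 := by
      have h := congrArg (IsScalarTower.toAlgHom F E K).toLinearMap hsum
      rw [map_sum, map_zero] at h
      simpa only [LinearMap.map_smul, AlgHom.toLinearMap_apply, map_pow,
        IsScalarTower.coe_toAlgHom'] using h
    have hK1 : ∑ i : Fin d, ∑ j : Fin m, gc i • η ^ q ^ ((i : ℕ) + d * (j : ℕ)) = 0 := by
      rw [← hK0]
      exact Finset.sum_congr rfl fun i _ => by rw [hpow (i : ℕ), Finset.smul_sum]
    set c : Fin n → F := fun k => gc ⟨(k : ℕ) % d, Nat.mod_lt _ hd0⟩ with hcdef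
    have hbound : ∀ (i : Fin d) (j : Fin m), (i : ℕ) + d * (j : ℕ) < n := by
      intro i j
      calc (i : ℕ) + d * (j : ℕ) < d + d * (j : ℕ) := Nat.add_lt_add_right i.isLt _
        _ = d * ((j : ℕ) + 1) := by ring
        _ ≤ d * m := Nat.mul_le_mul_left d j.isLt
        _ = n := hdm
    set e : Fin d × Fin m → Fin n := fun p => ⟨(p.1 : ℕ) + d * (p.2 : ℕ), hbound p.1 p.2⟩
      with hedef
    have hebij : Function.Bijective e := by
      rw [Fintype.bijective_iff_injective_and_card]
      constructor
      · rintro ⟨i1, j1⟩ ⟨i2, j2⟩ hij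
        have h' : (i1 : ℕ) + d * (j1 : ℕ) = (i2 : ℕ) + d * (j2 : ℕ) := congrArg Fin.val hij
        have hi : (i1 : ℕ) = (i2 : ℕ) := by
          have h2 := congrArg (· % d) h'
          simpa [Nat.add_mul_mod_self_left, Nat.mod_eq_of_lt i1.isLt,
            Nat.mod_eq_of_lt i2.isLt] using h2
        have hj : (j1 : ℕ) = (j2 : ℕ) := by
          rw [hi] at h'
          exact Nat.eq_of_mul_eq_mul_left hd0 (Nat.add_left_cancel h')
        simp [Prod.ext_iff, Fin.ext_iff, hi, hj]
      · simp [hdm, Nat.mul_comm]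
    have hterm : ∀ pr : Fin d × Fin m,
        gc pr.1 • η ^ q ^ ((pr.1 : ℕ) + d * (pr.2 : ℕ)) = c (e pr) • η ^ q ^ ((e pr : Fin n) : ℕ) := by
      rintro ⟨i, j⟩
      have hmod : ((i : ℕ) + d * (j : ℕ)) % d = (i : ℕ) := by
        rw [Nat.add_mul_mod_self_left, Nat.mod_eq_of_lt i.isLt]
      have hc : c (e (i, j)) = gc i := by
        simp only [hcdef, hedef]
        congr 1
        exact Fin.ext hmod
      rw [hc]
    have hsum0 : ∑ k : Fin n, c k • η ^ q ^ (k : ℕ) = 0 := by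
      calc ∑ k : Fin n, c k • η ^ q ^ (k : ℕ)
          = ∑ pr : Fin d × Fin m, gc pr.1 • η ^ q ^ ((pr.1 : ℕ) + d * (pr.2 : ℕ)) :=
            (Fintype.sum_bijective e hebij _ _ hterm).symm
        _ = ∑ i : Fin d, ∑ j : Fin m, gc i • η ^ q ^ ((i : ℕ) + d * (j : ℕ)) :=
            Fintype.sum_prod_type _
        _ = 0 := hK1
    have hall := Fintype.linearIndependent_iff.mp hli c hsum0
    have hlt : (i0 : ℕ) < n := lt_of_lt_of_le i0.isLt (hdm ▸ Nat.le_mul_of_pos_right d hm0)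
    have := hall ⟨(i0 : ℕ), hlt⟩
    rwa [show c ⟨(i0 : ℕ), hlt⟩ = gc i0 from by
      simp only [hcdef]; congr 1; exact Fin.ext (Nat.mod_eq_of_lt i0.isLt)] at this
  have hliE : LinearIndependent F (fun i : Fin d => γ ^ q ^ (i : ℕ)) :=
    Fintype.linearIndependent_iff.mpr keyc
  refine ⟨hliE, ?_⟩
  haveI : Nonempty (Fin d) := ⟨⟨0, hd0⟩⟩
  have hcard : Fintype.card (Fin d) = Module.finrank F E := by rw [Fintype.card_fin, hd]
  rw [← coe_basisOfLinearIndependentOfCardEqFinrank hliE hcard]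
  exact (basisOfLinearIndependentOfCardEqFinrank hliE hcard).span_eq
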